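/- arXiv:2106.11590 — 2 statements merged into one kernel-verified Lean document; each statement's English description precedes it below -/
import Mathlib

section
/- Let d be a positive odd squarefree integer, n ≥ 1, p an odd prime with p ∣ d, and k ≥ 1. Let R = ℤ[√-d]/(p^k) with σ the ring endomorphism induced by conjugation, and let L = diag(1,…,1,-1) of size n+1. Then the number of matrices A ∈ M_{n+1}(R) with A·L·σ(A)ᵀ = L equals 2p^k times the number of such matrices that in addition satisfy det A = 1. -/
open Matrix

/-- The quotient ring `ℤ[√-d]/(m)`. -/
abbrev Rq (d m : ℤ) : Type := Zsqrtd (-d) ⧸ Ideal.span {(m : Zsqrtd (-d))}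

/-- Conjugation `a + b√-d ↦ a - b√-d` descends to the quotient `ℤ[√-d]/(m)`. -/
noncomputable def conjQ (d m : ℤ) : Rq d m →+* Rq d m :=
  Ideal.quotientMap (Ideal.span {(m : Zsqrtd (-d))}) (starRingEnd (Zsqrtd (-d)))
    (by
      rw [Ideal.span_singleton_le_iff_mem, Ideal.mem_comap, map_intCast]
      exact Ideal.mem_span_singleton_self _)

/-- The diagonal matrix `diag(1, …, 1, -1)` of size `n+1`. -/
def Lmat (R : Type*) [Ring R] (n : ℕ) : Matrix (Fin (n + 1)) (Fin (n + 1)) R :=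
  Matrix.diagonal fun i => if i = Fin.last n then -1 else 1

theorem circle_count (p k : ℕ) (hp : p.Prime) (hp2 : p ≠ 2) (hk : 1 ≤ k)
    (D : ZMod (p ^ k))
    (hD : ZMod.castHom (dvd_pow_self p (Nat.one_le_iff_ne_zero.mp hk)) (ZMod p) D = 0) :
    Nat.card {x : ZMod (p ^ k) × ZMod (p ^ k) // x.1 ^ 2 + D * x.2 ^ 2 = 1} = 2 * p ^ k := by
  haveI : Fact p.Prime := ⟨hp⟩
  let π : ZMod (p ^ k) →+* ZMod p :=
    ZMod.castHom (dvd_pow_self p (Nat.one_le_iff_ne_zero.mp hk)) (ZMod p)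
  have hπD : π D = 0 := hD
  have hUnit : ∀ x : ZMod (p ^ k), π x ≠ 0 → IsUnit x := by
    intro x hx
    have hval : π x = ((x.val : ℕ) : ZMod p) := by
      simp [π, ZMod.castHom_apply, ZMod.natCast_val]
    have hx' : ¬ (p ∣ x.val) := by
      intro hdvd
      exact hx (by rw [hval, ZMod.natCast_eq_zero_iff]; exact hdvd)
    have : IsUnit ((x.val : ZMod (p ^ k))) := by
      rw [ZMod.isUnit_iff_coprime]
      exact Nat.Coprime.pow_right _ ((Nat.Prime.coprime_iff_not_dvd hp).mpr hx').symm
    rwa [ZMod.natCast_val, ZMod.cast_id] at this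
  have hpi2 : (2 : ZMod p) ≠ 0 := by
    have hnd : ¬ ((p:ℕ) ∣ 2) := fun h =>
      hp2 ((Nat.prime_dvd_prime_iff_eq hp Nat.prime_two).mp h)
    intro h
    apply hnd
    rwa [show ((2 : ZMod p)) = ((2 : ℕ) : ZMod p) by norm_num,
      ZMod.natCast_eq_zero_iff] at h
  have hu2 : IsUnit (2 : ZMod (p ^ k)) := hUnit 2 (by rw [_root_.map_ofNat]; exact hpi2)
  have hneg : (1 : ZMod p) ≠ -1 := fun h => hpi2 (by linear_combination h)
  have hv : ∀ t : ZMod (p ^ k), IsUnit (1 + D * t ^ 2) := fun t =>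
    hUnit _ (by
      rw [_root_.map_add, _root_.map_one, _root_.map_mul, hπD, zero_mul, add_zero]
      exact one_ne_zero)
  set v : ZMod (p ^ k) → ZMod (p ^ k) := fun t => Ring.inverse (1 + D * t ^ 2) with hvdef
  have hvmul : ∀ t, (1 + D * t ^ 2) * v t = 1 := fun t => Ring.mul_inverse_cancel _ (hv t)
  have hπv : ∀ t, π (v t) = 1 := by
    intro t
    have h := congrArg π (hvmul t)
    rw [_root_.map_mul, _root_.map_one, _root_.map_add, _root_.map_one, _root_.map_mul,
      hπD, zero_mul, add_zero, one_mul] at h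
    exact h
  let f : ZMod (p ^ k) × Bool → {x : ZMod (p ^ k) × ZMod (p ^ k) // x.1 ^ 2 + D * x.2 ^ 2 = 1} :=
    fun ts => ⟨((if ts.2 then 1 else -1) * ((1 - D * ts.1 ^ 2) * v ts.1), 2 * ts.1 * v ts.1), by
      obtain ⟨t, s⟩ := ts
      have h := hvmul t
      have hs : (if s then (1:ZMod (p ^ k)) else -1) ^ 2 = 1 := by cases s <;> simp
      show ((if s then (1:ZMod (p ^ k)) else -1) * ((1 - D * t ^ 2) * v t)) ^ 2
          + D * (2 * t * v t) ^ 2 = 1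
      rw [mul_pow, hs, one_mul]
      linear_combination ((1 + D*t^2) * v t + 1) * h⟩
  have hπa : ∀ (t : ZMod (p ^ k)) (s : Bool),
      π ((if s then (1:ZMod (p ^ k)) else -1) * ((1 - D * t ^ 2) * v t))
        = (if s then 1 else -1) := by
    intro t s
    rw [_root_.map_mul, _root_.map_mul, _root_.map_sub, _root_.map_one, _root_.map_mul,
      hπD, zero_mul, sub_zero, hπv, mul_one, mul_one]
    cases s <;> simp
  have finj : Function.Injective f := by
    rintro ⟨t, s⟩ ⟨t', s'⟩ heq
    have h1 := congrArg (fun x => x.1.1) heq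
    have h2 := congrArg (fun x => x.1.2) heq
    simp only [f] at h1 h2
    have hss : s = s' := by
      have hthis : (if s then (1:ZMod p) else -1) = (if s' then 1 else -1) := by
        rw [← hπa t s, ← hπa t' s', h1]
      cases s <;> cases s' <;>
        simp only [if_true, if_false, Bool.false_eq_true] at hthis ⊢ <;>
        first
          | rfl
          | exact absurd hthis hneg
          | exact absurd hthis.symm hneg
    subst hss
    have h1' : (1 - D*t^2) * v t = (1 - D*t'^2) * v t' := by
      cases s <;> simpa using h1
    have hvv : v t = v t' := by
      have h3 : 2 * v t = 2 * v t' := by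
        linear_combination h1' + hvmul t - hvmul t'
      exact hu2.mul_left_cancel h3
    have ht : t = t' := by
      have h3 : (2 * v t) * t = (2 * v t) * t' := by
        rw [hvv] at h2 ⊢
        linear_combination h2
      exact (hu2.mul (isUnit_ringInverse.mpr (hv t))).mul_left_cancel h3
    simp [ht]
  have fsurj : Function.Surjective f := by
    have key : ∀ a b : ZMod (p ^ k), a ^ 2 + D * b ^ 2 = 1 → π a = 1 →
        ∃ t, (1 - D*t^2) * v t = a ∧ 2 * t * v t = b := by
      intro a b hab ha
      have hu1a : IsUnit (1 + a) := by
        apply hUnit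
        rw [_root_.map_add, _root_.map_one, ha]
        intro h
        exact hpi2 (by linear_combination h)
      set w := Ring.inverse (1 + a) with hwdef
      have hw : (1 + a) * w = 1 := Ring.mul_inverse_cancel _ hu1a
      have h1 : (1 + a) * (1 + D * (b*w)^2) = 2 := by
        apply hu1a.mul_left_cancel
        linear_combination hab + D*b^2*((1+a)*w + 1) * hw
      refine ⟨b * w, ?_, ?_⟩
      · apply (hv (b*w)).mul_left_cancel
        linear_combination (1 - D*(b*w)^2) * hvmul (b*w) - h1
      · apply (hv (b*w)).mul_left_cancel
        linear_combination 2*(b*w) * hvmul (b*w) - (b*w) * h1 + ((1 + D*(b*w)^2)*b) * hw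
    rintro ⟨⟨a, b⟩, hab⟩
    have hsq : π a = 1 ∨ π a = -1 := by
      have hmm : π a * π a = 1 := by
        have h := congrArg π hab
        rw [_root_.map_add, _root_.map_one, _root_.map_mul, hπD, zero_mul, add_zero,
          _root_.map_pow] at h
        linear_combination h
      exact mul_self_eq_one_iff.mp hmm
    rcases hsq with ha | ha
    · obtain ⟨t, h1, h2⟩ := key a b hab ha
      refine ⟨(t, true), Subtype.ext ?_⟩
      show ((if true then (1:ZMod (p^k)) else -1) * ((1 - D * t ^ 2) * v t), 2 * t * v t) = (a, b)
      rw [Prod.mk.injEq]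
      constructor
      · simpa using h1
      · exact h2
    · obtain ⟨t, h1, h2⟩ := key (-a) b (by linear_combination hab)
        (by rw [map_neg, ha, neg_neg])
      refine ⟨(t, false), Subtype.ext ?_⟩
      show ((if false then (1:ZMod (p^k)) else -1) * ((1 - D * t ^ 2) * v t), 2 * t * v t) = (a, b)
      rw [Prod.mk.injEq]
      constructor
      · simp only [if_false, Bool.false_eq_true]
        linear_combination -h1
      · exact h2
  rw [← Nat.card_eq_of_bijective f ⟨finj, fsurj⟩, Nat.card_prod, Nat.card_zmod,
    Nat.card_eq_fintype_card]
  simp [mul_comm]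

theorem card_S_eq (d m : ℤ) (M : ℕ) [NeZero M] (hm : m = (M:ℤ)) :
    Nat.card {u : Rq d m // u * conjQ d m u = 1}
      = Nat.card {x : ZMod M × ZMod M // x.1 ^ 2 + (d : ZMod M) * x.2 ^ 2 = 1} := by
  subst hm
  have hcast : ∀ x : ZMod M, (((x.val : ℤ)) : ZMod M) = x := by
    intro x
    rw [Int.cast_natCast, ZMod.natCast_val, ZMod.cast_id]
  have hdvd : ∀ a b : ℤ, ((M:ℤ) ∣ a - b) ↔ ((a : ZMod M) = (b : ZMod M)) := by
    intro a b
    constructor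
    · intro h
      exact (ZMod.intCast_eq_intCast_iff _ _ _).mpr (Int.modEq_iff_dvd.mpr h).symm
    · intro h
      exact ((ZMod.intCast_eq_intCast_iff _ _ _).mp h).symm.dvd
  have hmk : ∀ z w : Zsqrtd (-d),
      Ideal.Quotient.mk (Ideal.span {((M:ℤ) : Zsqrtd (-d))}) z
        = Ideal.Quotient.mk (Ideal.span {((M:ℤ) : Zsqrtd (-d))}) w ↔
      (((z.re : ZMod M) = (w.re : ZMod M)) ∧ ((z.im : ZMod M) = (w.im : ZMod M))) := by
    intro z w
    rw [Ideal.Quotient.eq, Ideal.mem_span_singleton, Zsqrtd.intCast_dvd]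
    simp only [Zsqrtd.re_sub, Zsqrtd.im_sub]
    rw [hdvd, hdvd]
  have hc : ∀ z : Zsqrtd (-d),
      conjQ d (M:ℤ) (Ideal.Quotient.mk (Ideal.span {((M:ℤ) : Zsqrtd (-d))}) z)
        = Ideal.Quotient.mk (Ideal.span {((M:ℤ) : Zsqrtd (-d))}) (star z) :=
    fun z => Ideal.quotientMap_mk
  have hnorm : ∀ z : Zsqrtd (-d),
      (Ideal.Quotient.mk (Ideal.span {((M:ℤ) : Zsqrtd (-d))}) z
          * conjQ d (M:ℤ) (Ideal.Quotient.mk (Ideal.span {((M:ℤ) : Zsqrtd (-d))}) z) = 1 ↔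
        ((z.re : ZMod M))^2 + (d : ZMod M) * ((z.im : ZMod M))^2 = 1) := by
    intro z
    rw [hc, ← _root_.map_mul,
      show (1 : Rq d (M:ℤ)) = Ideal.Quotient.mk (Ideal.span {((M:ℤ) : Zsqrtd (-d))}) 1 from
        (_root_.map_one _).symm,
      hmk]
    have h1 : (z * star z).re = z.re^2 + d * z.im^2 := by
      simp [Zsqrtd.re_mul, Zsqrtd.re_star, Zsqrtd.im_star]
      ring
    have h2 : (z * star z).im = 0 := by
      simp [Zsqrtd.im_mul, Zsqrtd.re_star, Zsqrtd.im_star]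
      ring
    rw [h1, h2]
    simp only [Zsqrtd.re_one, Zsqrtd.im_one, Int.cast_zero, Int.cast_one, and_true]
    push_cast
    constructor <;> intro h <;> linear_combination h
  let g : {x : ZMod M × ZMod M // x.1 ^ 2 + (d : ZMod M) * x.2 ^ 2 = 1} →
      {u : Rq d (M:ℤ) // u * conjQ d (M:ℤ) u = 1} :=
    fun x => ⟨Ideal.Quotient.mk _ (⟨(x.1.1.val : ℤ), (x.1.2.val : ℤ)⟩ : Zsqrtd (-d)), by
      rw [hnorm]
      show (((x.1.1.val : ℤ) : ZMod M))^2 + (d : ZMod M) * (((x.1.2.val : ℤ) : ZMod M))^2 = 1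
      rw [hcast, hcast]
      exact x.2⟩
  have ginj : Function.Injective g := by
    rintro ⟨⟨a, b⟩, hx⟩ ⟨⟨a', b'⟩, hx'⟩ h
    have h0 := congrArg Subtype.val h
    rw [hmk] at h0
    obtain ⟨e1, e2⟩ := h0
    apply Subtype.ext
    show (a, b) = (a', b')
    rw [Prod.mk.injEq]
    constructor
    · rw [← hcast a, ← hcast a']; exact e1
    · rw [← hcast b, ← hcast b']; exact e2
  have gsurj : Function.Surjective g := by
    rintro ⟨u, hu⟩
    obtain ⟨z, rfl⟩ := Ideal.Quotient.mk_surjective u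
    refine ⟨⟨((z.re : ZMod M), (z.im : ZMod M)), (hnorm z).mp hu⟩, ?_⟩
    apply Subtype.ext
    show Ideal.Quotient.mk _ (⟨(((z.re : ZMod M)).val : ℤ), (((z.im : ZMod M)).val : ℤ)⟩ :
      Zsqrtd (-d)) = Ideal.Quotient.mk _ z
    rw [hmk]
    exact ⟨hcast _, hcast _⟩
  exact (Nat.card_eq_of_bijective g ⟨ginj, gsurj⟩).symm

theorem conjQ_conjQ (d m : ℤ) (x : Rq d m) : conjQ d m (conjQ d m x) = x := by
  obtain ⟨z, rfl⟩ := Ideal.Quotient.mk_surjective x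
  have h : ∀ w : Zsqrtd (-d), conjQ d m (Ideal.Quotient.mk _ w) = Ideal.Quotient.mk _ (star w) :=
    fun w => Ideal.quotientMap_mk
  rw [h, h, star_star]

theorem card_U_eq_mul (R : Type*) [CommRing R] (σ : R →+* R) (hσ : ∀ x, σ (σ x) = x) (n : ℕ) :
    Nat.card {A : Matrix (Fin (n+1)) (Fin (n+1)) R //
        A * Lmat R n * (A.map σ)ᵀ = Lmat R n}
      = Nat.card {s : R // s * σ s = 1} *
        Nat.card {A : Matrix (Fin (n+1)) (Fin (n+1)) R //
          A * Lmat R n * (A.map σ)ᵀ = Lmat R n ∧ A.det = 1} := by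
  classical
  let Dm : R → Matrix (Fin (n+1)) (Fin (n+1)) R :=
    fun s => Matrix.diagonal (fun i => if i = Fin.last n then s else 1)
  have hDmul : ∀ s t : R, Dm s * Dm t = Dm (s*t) := by
    intro s t
    simp only [Dm, Matrix.diagonal_mul_diagonal]
    apply congrArg Matrix.diagonal
    funext i
    split_ifs <;> ring
  have hDone : Dm 1 = 1 := by
    simp only [Dm]
    rw [show (fun i : Fin (n+1) => if i = Fin.last n then (1:R) else 1) = fun _ => 1 by
      funext i; split_ifs <;> rfl]
    exact Matrix.diagonal_one
  have hDmap : ∀ s, (Dm s).map σ = Dm (σ s) := by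
    intro s
    rw [Matrix.diagonal_map (map_zero σ)]
    simp only [Dm]
    apply congrArg Matrix.diagonal
    funext i
    split_ifs <;> simp
  have hDT : ∀ s, (Dm s)ᵀ = Dm s := fun s => Matrix.diagonal_transpose _
  have hDdet : ∀ s, (Dm s).det = s := by
    intro s
    rw [Matrix.det_diagonal]
    simp [Finset.prod_ite_eq']
  have hDL : ∀ s t : R, s * t = 1 →
      Dm s * Lmat R n * Dm t = Lmat R n := by
    intro s t hst
    rw [Lmat]
    simp only [Dm, Matrix.diagonal_mul_diagonal]
    apply congrArg Matrix.diagonal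
    funext i
    split_ifs
    · linear_combination -hst
    · ring
  have hLdet : (Lmat R n).det * (Lmat R n).det = 1 := by
    rw [← Matrix.det_mul, Lmat, Matrix.diagonal_mul_diagonal]
    rw [show (fun i : Fin (n+1) =>
        (if i = Fin.last n then (-1:R) else 1) * (if i = Fin.last n then -1 else 1))
        = fun _ => 1 by funext i; split_ifs <;> ring]
    rw [Matrix.diagonal_one, Matrix.det_one]
  have hUmem : ∀ (s : R) (A : Matrix (Fin (n+1)) (Fin (n+1)) R), s * σ s = 1 →
      A * Lmat R n * (A.map σ)ᵀ = Lmat R n →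
      (Dm s * A) * Lmat R n * ((Dm s * A).map σ)ᵀ = Lmat R n := by
    intro s A hs hA
    rw [Matrix.map_mul, hDmap, Matrix.transpose_mul, hDT]
    calc Dm s * A * Lmat R n * ((A.map σ)ᵀ * Dm (σ s))
        = Dm s * (A * Lmat R n * (A.map σ)ᵀ) * Dm (σ s) := by
          simp only [Matrix.mul_assoc]
      _ = Dm s * Lmat R n * Dm (σ s) := by rw [hA]
      _ = Lmat R n := hDL s (σ s) hs
  have hmapdet : ∀ A : Matrix (Fin (n+1)) (Fin (n+1)) R, (A.map σ).det = σ A.det := by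
    intro A
    rw [RingHom.map_det]
    rfl
  have hdetS : ∀ A : Matrix (Fin (n+1)) (Fin (n+1)) R,
      A * Lmat R n * (A.map σ)ᵀ = Lmat R n → A.det * σ A.det = 1 := by
    intro A hA
    have h := congrArg Matrix.det hA
    rw [Matrix.det_mul, Matrix.det_mul, Matrix.det_transpose, hmapdet] at h
    linear_combination (Lmat R n).det * h - (A.det * σ A.det - 1) * hLdet
  let e : {s : R // s * σ s = 1} ×
      {A : Matrix (Fin (n+1)) (Fin (n+1)) R //
        A * Lmat R n * (A.map σ)ᵀ = Lmat R n ∧ A.det = 1} ≃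
      {A : Matrix (Fin (n+1)) (Fin (n+1)) R //
        A * Lmat R n * (A.map σ)ᵀ = Lmat R n} :=
    { toFun := fun x => ⟨Dm x.1.1 * x.2.1, hUmem _ _ x.1.2 x.2.2.1⟩
      invFun := fun y =>
        ⟨⟨y.1.det, hdetS _ y.2⟩,
         ⟨Dm (σ y.1.det) * y.1,
          hUmem _ _ (by rw [hσ]; linear_combination hdetS _ y.2) y.2,
          by rw [Matrix.det_mul, hDdet]; linear_combination hdetS _ y.2⟩⟩
      left_inv := by
        rintro ⟨⟨s, hs⟩, ⟨A, hA, hdA⟩⟩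
        have hd : (Dm s * A).det = s := by
          rw [Matrix.det_mul, hDdet, hdA, mul_one]
        refine Prod.ext (Subtype.ext ?_) (Subtype.ext ?_)
        · exact hd
        · show Dm (σ (Dm s * A).det) * (Dm s * A) = A
          rw [hd, ← Matrix.mul_assoc, hDmul,
            show σ s * s = 1 by linear_combination hs, hDone, Matrix.one_mul]
      right_inv := by
        rintro ⟨B, hB⟩
        apply Subtype.ext
        show Dm B.det * (Dm (σ B.det) * B) = B
        rw [← Matrix.mul_assoc, hDmul, hdetS _ hB, hDone, Matrix.one_mul] }
  rw [← Nat.card_prod]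
  exact (Nat.card_congr e).symm

/-- Ramified index formula: over `R = ℤ[√-d]/(p^k)` with `p` an odd prime dividing
`d`, `#U(L,R) = 2·p^k · #SU(L,R)`. -/
theorem card_U_eq_index_mul_card_SU_ramified (d : ℤ) (hd : 0 < d) (hodd : Odd d)
    (hsf : Squarefree d) (n : ℕ) (hn : 1 ≤ n) (p : ℕ) (hp : p.Prime) (hp2 : p ≠ 2)
    (hpd : (p : ℤ) ∣ d) (k : ℕ) (hk : 1 ≤ k) :
    Nat.card {A : Matrix (Fin (n + 1)) (Fin (n + 1)) (Rq d (p ^ k)) //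
        A * Lmat (Rq d (p ^ k)) n * (A.map (conjQ d (p ^ k)))ᵀ = Lmat (Rq d (p ^ k)) n}
      = 2 * p ^ k *
        Nat.card {A : Matrix (Fin (n + 1)) (Fin (n + 1)) (Rq d (p ^ k)) //
          A * Lmat (Rq d (p ^ k)) n * (A.map (conjQ d (p ^ k)))ᵀ = Lmat (Rq d (p ^ k)) n ∧
          A.det = 1} := by
  haveI : NeZero (p ^ k) := ⟨pow_ne_zero k hp.pos.ne'⟩
  have hD : ZMod.castHom (dvd_pow_self p (Nat.one_le_iff_ne_zero.mp hk)) (ZMod p)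
      ((d : ZMod (p ^ k))) = 0 := by
    rw [map_intCast, ZMod.intCast_zmod_eq_zero_iff_dvd]
    exact_mod_cast hpd
  rw [card_U_eq_mul _ (conjQ d ((p:ℤ) ^ k)) (conjQ_conjQ d _) n,
    card_S_eq d ((p:ℤ) ^ k) (p ^ k) (by push_cast; ring),
    circle_count p k hp hp2 hk ((d : ZMod (p ^ k))) hD]
end

section
/- Let d be a positive squarefree integer with d ≡ 1 (mod 4) and n ≥ 1. Then there exists k₀ such that for all k ≥ k₀, with R = ℤ[√-d]/(2^k), σ the ring endomorphism induced by conjugation, and M = diag(1,…,1,-2) of size n+1, the number of matrices A ∈ M_{n+1}(R) with A·M·σ(A)ᵀ = M equals 2^{k+2} times the number of such matrices that in addition satisfy det A = 1. -/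
open Matrix

/-- The diagonal matrix `diag(1, …, 1, -2)` of size `n+1`. -/
def Mmat (R : Type*) [Ring R] (n : ℕ) : Matrix (Fin (n + 1)) (Fin (n + 1)) R :=
  Matrix.diagonal fun i => if i = Fin.last n then -2 else 1

open Finset

section Generic

/-- Fibers of a surjective `AddMonoidHom` all have the same cardinality. -/
lemma fiber_card_const {α β : Type*} [AddCommGroup α] [AddCommGroup β] (f : α →+ β)
    (hf : Function.Surjective f) (b₁ b₂ : β) :
    Nat.card {a : α // f a = b₁} = Nat.card {a : α // f a = b₂} := by
  obtain ⟨a₁, ha₁⟩ := hf b₁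
  obtain ⟨a₂, ha₂⟩ := hf b₂
  refine Nat.card_congr ⟨fun x => ⟨x.1 + (a₂ - a₁), ?_⟩, fun y => ⟨y.1 + (a₁ - a₂), ?_⟩, ?_, ?_⟩
  · rw [map_add, map_sub, x.2, ha₁, ha₂]; abel
  · rw [map_add, map_sub, y.2, ha₁, ha₂]; abel
  · intro x; ext; push_cast; abel
  · intro y; ext; push_cast; abel

/-- Counting a pulled-back predicate along a map with constant fibers. -/
lemma card_comp_of_fiber_const {α β : Type*} [Finite α] [Finite β] (f : α → β)
    (hconst : ∀ b₁ b₂ : β, Nat.card {a : α // f a = b₁} = Nat.card {a : α // f a = b₂})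
    (Q : β → Prop) :
    Nat.card β * Nat.card {a : α // Q (f a)} = Nat.card α * Nat.card {b : β // Q b} := by
  classical
  cases isEmpty_or_nonempty β with
  | inl h =>
    have : IsEmpty α := ⟨fun a => (h.1 (f a))⟩
    simp [Nat.card_of_isEmpty]
  | inr h =>
    obtain ⟨b₀⟩ := h
    set c := Nat.card {a : α // f a = b₀} with hc
    have hfib : ∀ b : β, Nat.card {a : α // f a = b} = c := fun b => hconst b b₀
    have := Fintype.ofFinite α
    have := Fintype.ofFinite β
    have key : ∀ (P : β → Prop) [DecidablePred P],
        Fintype.card {a : α // P (f a)} = (univ.filter P).card * c := by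
      intro P _
      rw [Fintype.card_subtype]
      rw [Finset.card_eq_sum_card_fiberwise (f := f) (t := univ.filter P)
        (fun x hx => by simpa using (Finset.mem_filter.mp hx).2)]
      rw [Finset.sum_congr rfl (fun b hb => ?_), Finset.sum_const, smul_eq_mul]
      have hb' : P b := (Finset.mem_filter.mp hb).2
      have : (univ.filter (fun a => P (f a))).filter (fun a => f a = b)
          = univ.filter (fun a => f a = b) := by
        ext a; simp only [Finset.mem_filter, Finset.mem_univ, true_and]
        constructor
        · rintro ⟨_, h2⟩; exact h2
        · intro h2; exact ⟨h2 ▸ hb', h2⟩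
      rw [this, ← Fintype.card_subtype, ← Nat.card_eq_fintype_card, hfib b]
    have h1 : Fintype.card {a : α // Q (f a)} = (univ.filter Q).card * c := key Q
    have h2 : Fintype.card α = Fintype.card β * c := by
      have h := key (fun _ => True)
      rw [show univ.filter (fun _ : β => True) = univ from Finset.filter_true_of_mem (fun _ _ => trivial), Finset.card_univ] at h
      rw [← h]
      exact (Fintype.card_congr (Equiv.subtypeUnivEquiv (fun _ => trivial))).symm
    rw [Nat.card_eq_fintype_card, Nat.card_eq_fintype_card, Nat.card_eq_fintype_card,
      Nat.card_eq_fintype_card, h1, h2, Fintype.card_subtype]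
    ring

end Generic

section ZModCount

local instance pow2NeZero (m : ℕ) : NeZero ((2:ℕ)^m) := ⟨(Nat.pow_pos (n := m) two_pos).ne'⟩

variable (d : ℤ)

/-- squares in `ZMod 2^(m+1)` only depend on the argument mod `2^m`. -/
lemma sq_cast_eq (m : ℕ) (u v : ℤ) (h : (2^(m+1) : ℤ) ∣ u - v) :
    ((u : ZMod (2^(m+2))))^2 = ((v : ZMod (2^(m+2))))^2 := by
  obtain ⟨t, ht⟩ := h
  have hu : u = v + 2^(m+1) * t := by linarith
  have : ((u^2 - v^2 : ℤ) : ZMod (2^(m+2))) = 0 := by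
    have : u^2 - v^2 = 2^(m+2) * (v*t + 2^m*t^2) := by rw [hu]; ring
    rw [this, Int.cast_mul]
    have h0 : ((2^(m+2) : ℤ) : ZMod (2^(m+2))) = 0 := by
      rw [ZMod.intCast_zmod_eq_zero_iff_dvd]
      exact_mod_cast dvd_refl _
    rw [h0, zero_mul]
  have h2 : ((u : ZMod (2^(m+2))))^2 - ((v : ZMod (2^(m+2))))^2
      = ((u^2 - v^2 : ℤ) : ZMod (2^(m+2))) := by push_cast; ring
  rw [this] at h2
  exact sub_eq_zero.mp h2
end ZModCount

section ZC2
variable (d : ℤ)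

local instance (m : ℕ) : NeZero ((2:ℕ)^m) := ⟨(Nat.pow_pos (n := m) two_pos).ne'⟩

/-- solution count at level `m`. -/
noncomputable def solN (m : ℕ) : ℕ :=
  Nat.card {q : ZMod (2^m) × ZMod (2^m) // q.1^2 + (d : ZMod (2^m)) * q.2^2 = 1}

/-- canonical lift of the quadratic form to the next level. -/
def gmap (m : ℕ) (q : ZMod (2^m) × ZMod (2^m)) : ZMod (2^(m+1)) :=
  (q.1.val : ZMod (2^(m+1)))^2 + (d : ZMod (2^(m+1))) * (q.2.val : ZMod (2^(m+1)))^2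

noncomputable def BN (m : ℕ) : ℕ :=
  Nat.card {q : ZMod (2^m) × ZMod (2^m) // gmap d m q = 1}

lemma pi_apply (m : ℕ) (x : ZMod (2^(m+1))) :
    ZMod.castHom (pow_dvd_pow 2 (Nat.le_succ m)) (ZMod (2^m)) x = (x.val : ZMod (2^m)) := by
  rw [ZMod.castHom_apply, ← ZMod.natCast_val]

lemma val_mod_dvd (m : ℕ) (x : ZMod (2^(m+1))) :
    ((2:ℤ)^m) ∣ ((x.val : ZMod (2^m)).val : ℤ) - (x.val : ℤ) := by
  rw [ZMod.val_natCast]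
  have h := (Nat.mod_modEq x.val (2^m)).dvd
  push_cast at h ⊢
  exact dvd_sub_comm.mp h

end ZC2

section ZC3
variable (d : ℤ)

lemma natCast_val_self {n : ℕ} [NeZero n] (x : ZMod n) : ((x.val : ℕ) : ZMod n) = x :=
  ZMod.natCast_rightInverse x

lemma form_eq_g (m : ℕ) (p : ZMod (2^(m+2)) × ZMod (2^(m+2))) :
    p.1^2 + (d : ZMod (2^(m+2))) * p.2^2
      = gmap d (m+1) ((p.1.val : ZMod (2^(m+1))), (p.2.val : ZMod (2^(m+1)))) := by
  have key : ∀ x : ZMod (2^(m+2)),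
      x^2 = (((x.val : ZMod (2^(m+1))).val : ℕ) : ZMod (2^(m+2)))^2 := by
    intro x
    have h1 : ((x.val : ℕ) : ZMod (2^(m+2))) = x := natCast_val_self x
    have h2 := sq_cast_eq m (((x.val : ZMod (2^(m+1))).val : ℤ)) ((x.val : ℤ))
      (by
        rw [ZMod.val_natCast]
        have h := (Nat.mod_modEq x.val (2^(m+1))).dvd
        push_cast at h ⊢
        exact dvd_sub_comm.mp h)
    push_cast at h2
    conv_lhs => rw [← h1]
    exact h2.symm
  simp only [gmap]
  rw [key p.1, key p.2]

end ZC3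

section ZC4
variable (d : ℤ)

lemma g_castdown (m : ℕ) (q : ZMod (2^m) × ZMod (2^m)) :
    ZMod.castHom (pow_dvd_pow 2 (Nat.le_succ m)) (ZMod (2^m)) (gmap d m q)
      = q.1^2 + (d : ZMod (2^m)) * q.2^2 := by
  simp only [gmap, map_add, _root_.map_mul, map_pow, map_natCast, map_intCast]
  rw [natCast_val_self, natCast_val_self]

lemma sol_iff_g (m : ℕ) (hm : 1 ≤ m) (q : ZMod (2^m) × ZMod (2^m)) :
    q.1^2 + (d : ZMod (2^m)) * q.2^2 = 1
      ↔ (gmap d m q = 1 ∨ gmap d m q = 1 + (2^m : ℕ)) := by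
  constructor
  · intro hsol
    set w := (gmap d m q).val with hw
    have hlt : w < 2^(m+1) := ZMod.val_lt _
    have hcast : ((w : ℕ) : ZMod (2^m)) = 1 := by
      have h1 : ((w : ℕ) : ZMod (2^m))
          = ZMod.castHom (pow_dvd_pow 2 (Nat.le_succ m)) (ZMod (2^m)) (gmap d m q) := by
        rw [pi_apply]
      rw [h1, g_castdown, hsol]
    have hdvd : ((2:ℤ)^m) ∣ ((w : ℤ) - 1) := by
      have := (ZMod.natCast_eq_zero_iff (w + (2^m - 1)) (2^m)).mp (by
        push_cast
        rw [hcast]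
        have : ((2^m - 1 : ℕ) : ZMod (2^m)) + 1 = 0 := by
          have : ((2^m - 1 : ℕ) : ZMod (2^m)) + ((1:ℕ) : ZMod (2^m)) = ((2^m : ℕ) : ZMod (2^m)) := by
            rw [← Nat.cast_add]
            congr 1
            have : 1 ≤ 2^m := Nat.one_le_two_pow
            omega
          simpa [ZMod.natCast_self] using this
        push_cast at this
        linear_combination this)
      obtain ⟨c, hc⟩ := this
      refine ⟨(c : ℤ) - 1, ?_⟩
      have h1 : 1 ≤ 2^m := Nat.one_le_two_pow
      have : (w : ℤ) + (2^m - 1) = 2^m * c := by exact_mod_cast congrArg (Nat.cast : ℕ → ℤ) hc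
      push_cast at this ⊢
      linarith
    obtain ⟨t, ht⟩ := hdvd
    have hP : (0:ℤ) < 2^m := by positivity
    have hP2 : (2:ℤ) ≤ 2^m := by
      calc (2:ℤ) = 2^1 := by norm_num
      _ ≤ 2^m := by exact pow_le_pow_right₀ (by norm_num) hm
    have hw0 : (0:ℤ) ≤ (w:ℤ) := Int.ofNat_nonneg w
    have ht0 : 0 ≤ t := by nlinarith
    have ht2 : t < 2 := by
      have hlt' : (w : ℤ) < 2 * 2^m := by
        have : (w:ℤ) < 2^(m+1) := by exact_mod_cast hlt
        calc (w:ℤ) < 2^(m+1) := this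
        _ = 2 * 2^m := by ring
      nlinarith
    have hgw : gmap d m q = ((w : ℕ) : ZMod (2^(m+1))) := (natCast_val_self _).symm
    interval_cases t
    · left
      rw [hgw]
      have : (w : ℤ) = 1 := by linarith
      have hw1 : w = 1 := by exact_mod_cast this
      rw [hw1]; norm_num
    · right
      rw [hgw]
      have : (w : ℤ) = 1 + 2^m := by linarith
      have hw1 : w = 1 + 2^m := by exact_mod_cast this
      rw [hw1]; push_cast; ring
  · intro h
    have hc := g_castdown d m q
    rcases h with h | h <;> rw [h] at hc
    · rw [_root_.map_one] at hc
      exact hc.symm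
    · rw [map_add, _root_.map_one, map_natCast, ZMod.natCast_self] at hc
      rw [← hc]
      ring

end ZC4

section ZC5
variable (d : ℤ)

lemma g_odd (m : ℕ) (hm : 1 ≤ m) (hd : d % 2 = 1) (q : ZMod (2^m) × ZMod (2^m))
    (h : gmap d m q = 1 ∨ gmap d m q = 1 + (2^m : ℕ)) (h1 : ¬ Odd q.1.val) :
    Odd q.2.val := by
  set A : ℤ := (q.1.val : ℤ)^2 + d * (q.2.val : ℤ)^2 with hA
  have hgA : gmap d m q = ((A : ℤ) : ZMod (2^(m+1))) := by
    simp only [gmap, hA]; push_cast; ring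
  have hAodd : Odd A := by
    obtain ⟨j, rfl⟩ : ∃ j, m = j + 1 := ⟨m - 1, by omega⟩
    rcases h with h | h
    · rw [hgA] at h
      have := (ZMod.intCast_eq_intCast_iff_dvd_sub 1 A (2^(j+1+1))).mp (by exact_mod_cast h.symm)
      obtain ⟨t, ht⟩ := this
      refine ⟨(2^(j+1) * t : ℤ), ?_⟩
      have : A - 1 = 2^(j+2) * t := by exact_mod_cast ht
      push_cast at this ⊢
      linarith [this, (by ring : (2:ℤ)^(j+2) * t = 2 * (2^(j+1) * t))]
    · rw [hgA] at h
      have := (ZMod.intCast_eq_intCast_iff_dvd_sub ((1 + 2^(j+1) : ℕ) : ℤ) A (2^(j+1+1))).mp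
        (by push_cast at h ⊢; exact_mod_cast h.symm)
      obtain ⟨t, ht⟩ := this
      refine ⟨2^j + 2^(j+1) * t, ?_⟩
      have : A - (1 + 2^(j+1)) = 2^(j+2) * t := by exact_mod_cast ht
      have e1 : (2:ℤ)^(j+1) = 2 * 2^j := by ring
      have e2 : (2:ℤ)^(j+2) * t = 2 * (2^(j+1) * t) := by ring
      linarith
  by_contra h2
  rw [Nat.not_odd_iff_even] at h1 h2
  obtain ⟨a', ha'⟩ := h1
  obtain ⟨b', hb'⟩ := h2
  have : Even A := by
    have e1 : (q.1.val : ℤ) = (a' : ℤ) + a' := by exact_mod_cast ha'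
    have e2 : (q.2.val : ℤ) = (b' : ℤ) + b' := by exact_mod_cast hb'
    refine ⟨2*(a':ℤ)^2 + d * 2 * (b':ℤ)^2, ?_⟩
    rw [hA, e1, e2]; ring
  exact (Int.not_odd_iff_even.mpr this) hAodd

end ZC5

section ZC6
variable (d : ℤ)

/-- the pairing involution: add `2^(m-1)` to the odd coordinate. -/
def iota (m : ℕ) (q : ZMod (2^m) × ZMod (2^m)) : ZMod (2^m) × ZMod (2^m) :=
  if Odd q.1.val then (q.1 + ((2^(m-1) : ℕ) : ZMod (2^m)), q.2)
  else (q.1, q.2 + ((2^(m-1) : ℕ) : ZMod (2^m)))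

lemma val_add_half (j : ℕ) (x : ZMod (2^(j+1))) :
    (x + ((2^j : ℕ) : ZMod (2^(j+1)))).val = (x.val + 2^j) % 2^(j+1) := by
  have hc : ((2^j : ℕ) : ZMod (2^(j+1))).val = 2^j := by
    rw [ZMod.val_natCast]
    exact Nat.mod_eq_of_lt (Nat.pow_lt_pow_right (by norm_num) (Nat.lt_succ_self j))
  rw [ZMod.val_add, hc]

lemma parity_add_half (j : ℕ) (x : ZMod (2^(j+2))) :
    Odd ((x + ((2^(j+1) : ℕ) : ZMod (2^(j+2)))).val) ↔ Odd x.val := by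
  rw [val_add_half (j+1) x]
  have hdvd : (2:ℕ) ∣ 2^(j+2) := ⟨2^(j+1), by ring⟩
  have h2 : (x.val + 2^(j+1)) % 2^(j+2) % 2 = (x.val + 2^(j+1)) % 2 :=
    Nat.ModEq.of_dvd hdvd (Nat.mod_modEq _ _)
  have h3 : (2:ℕ)^(j+1) = 2 * 2^j := by ring
  rw [Nat.odd_iff, Nat.odd_iff, h2]
  omega

lemma half_add_half (j : ℕ) :
    ((2^(j+1) : ℕ) : ZMod (2^(j+2))) + ((2^(j+1) : ℕ) : ZMod (2^(j+2))) = 0 := by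
  rw [← Nat.cast_add]
  have : (2:ℕ)^(j+1) + 2^(j+1) = 2^(j+2) := by ring
  rw [this, ZMod.natCast_self]

lemma iota_invol (j : ℕ) (q : ZMod (2^(j+2)) × ZMod (2^(j+2))) :
    iota (j+2) (iota (j+2) q) = q := by
  unfold iota
  simp only [show j + 2 - 1 = j + 1 from rfl]
  by_cases h : Odd q.1.val
  · rw [if_pos h]
    simp only
    rw [if_pos ((parity_add_half j q.1).mpr h)]
    rw [add_assoc, half_add_half, add_zero]
  · rw [if_neg h]
    simp only
    rw [if_neg h]
    rw [add_assoc, half_add_half, add_zero]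

/-- key square-shift computation -/
lemma sq_shift (j : ℕ) (e : ℤ) (x : ZMod (2^(j+3))) (hodd : Odd (e * (x.val : ℤ))) :
    (e : ZMod (2^(j+4))) * (((x + ((2^(j+2) : ℕ) : ZMod (2^(j+3)))).val : ℕ) : ZMod (2^(j+4)))^2
      = (e : ZMod (2^(j+4))) * ((x.val : ℕ) : ZMod (2^(j+4)))^2 + ((2^(j+3) : ℕ) : ZMod (2^(j+4))) := by
  have h1 : (((x + ((2^(j+2) : ℕ) : ZMod (2^(j+3)))).val : ℕ) : ZMod (2^(j+4)))^2
      = (((x.val + 2^(j+2) : ℕ) : ℤ) : ZMod (2^(j+4)))^2 := by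
    have hd : ((2:ℤ)^(j+3)) ∣ ((x + ((2^(j+2) : ℕ) : ZMod (2^(j+3)))).val : ℤ) - ((x.val + 2^(j+2) : ℕ) : ℤ) := by
      rw [val_add_half (j+2) x]
      have h := (Nat.mod_modEq (x.val + 2^(j+2)) (2^(j+3))).dvd
      push_cast at h ⊢
      exact dvd_sub_comm.mp h
    have := sq_cast_eq (j+2) _ _ hd
    push_cast at this ⊢
    exact this
  rw [h1]
  obtain ⟨s, hs⟩ := hodd
  have key : (e * ((x.val + 2^(j+2) : ℕ) : ℤ)^2 : ℤ)
      = e * (x.val : ℤ)^2 + 2^(j+3) + 2^(j+4) * (s + e * 2^j) := by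
    push_cast
    linear_combination ((2:ℤ)^(j+3)) * hs
  have hcast : ((2^(j+4) : ℤ) : ZMod (2^(j+4))) = 0 := by
    rw [ZMod.intCast_zmod_eq_zero_iff_dvd]; exact_mod_cast dvd_refl _
  calc (e : ZMod (2^(j+4))) * (((x.val + 2^(j+2) : ℕ) : ℤ) : ZMod (2^(j+4)))^2
      = ((e * ((x.val + 2^(j+2) : ℕ) : ℤ)^2 : ℤ) : ZMod (2^(j+4))) := by push_cast; ring
    _ = ((e * (x.val : ℤ)^2 + 2^(j+3) + 2^(j+4) * (s + e * 2^j) : ℤ) : ZMod (2^(j+4))) := by rw [key]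
    _ = (e : ZMod (2^(j+4))) * ((x.val : ℕ) : ZMod (2^(j+4)))^2 + ((2^(j+3) : ℕ) : ZMod (2^(j+4))) := by
        push_cast
        rw [show ((2:ZMod (2^(j+4)))^(j+4)) = ((2^(j+4) : ℤ) : ZMod (2^(j+4))) by push_cast; ring, hcast]
        ring

end ZC6

section ZC7
variable (d : ℤ)

lemma g_shift (j : ℕ) (hd : d % 2 = 1) (q : ZMod (2^(j+3)) × ZMod (2^(j+3)))
    (h : gmap d (j+3) q = 1 ∨ gmap d (j+3) q = 1 + (2^(j+3) : ℕ)) :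
    gmap d (j+3) (iota (j+3) q) = gmap d (j+3) q + ((2^(j+3) : ℕ) : ZMod (2^(j+4))) := by
  have hdodd : Odd d := Int.odd_iff.mpr hd
  unfold iota
  simp only [show j + 3 - 1 = j + 2 from rfl]
  by_cases h1 : Odd q.1.val
  · rw [if_pos h1]
    have := sq_shift j 1 q.1 (by simpa using (Int.odd_coe_nat _).mpr h1)
    simp only [Int.cast_one, one_mul] at this
    simp only [gmap]
    rw [this]
    ring
  · rw [if_neg h1]
    have h2 : Odd q.2.val := g_odd d (j+3) (by omega) hd q h h1
    have := sq_shift j d q.2 (hdodd.mul ((Int.odd_coe_nat _).mpr h2))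
    simp only [gmap]
    rw [this]
    ring

end ZC7

section ZC8
variable (d : ℤ)

lemma two_pow_cast_ne (j : ℕ) : ((2^(j+3) : ℕ) : ZMod (2^(j+4))) ≠ 0 := by
  rw [Ne, ZMod.natCast_eq_zero_iff]
  intro h
  have := Nat.le_of_dvd (by positivity) h
  exact absurd (Nat.pow_le_pow_iff_right (by norm_num) |>.mp this) (by omega)

lemma BN_split (j : ℕ) (hd : d % 2 = 1) : solN d (j+3) = 2 * BN d (j+3) := by
  classical
  have e1 : solN d (j+3)
      = Nat.card {q : ZMod (2^(j+3)) × ZMod (2^(j+3)) //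
          gmap d (j+3) q = 1 ∨ gmap d (j+3) q = 1 + ((2^(j+3) : ℕ) : ZMod (2^(j+4)))} := by
    exact Nat.card_congr (Equiv.subtypeEquivRight (fun q => sol_iff_g d (j+3) (by omega) q))
  have heq : ∀ q : ZMod (2^(j+3)) × ZMod (2^(j+3)),
      (gmap d (j+3) q = 1 ∨ gmap d (j+3) q = 1 + ((2^(j+3) : ℕ) : ZMod (2^(j+4)))) →
      gmap d (j+3) (iota (j+3) q) = gmap d (j+3) q + ((2^(j+3) : ℕ) : ZMod (2^(j+4))) :=
    fun q h => g_shift d j hd q h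
  -- the two pieces are in bijection via iota
  have e2 : Nat.card {q : ZMod (2^(j+3)) × ZMod (2^(j+3)) //
      gmap d (j+3) q = 1 + ((2^(j+3) : ℕ) : ZMod (2^(j+4)))} = BN d (j+3) := by
    have hh : ((2^(j+3):ℕ) : ZMod (2^(j+4))) + ((2^(j+3):ℕ) : ZMod (2^(j+4))) = 0 :=
      half_add_half (j+2)
    have hinv : ∀ q : ZMod (2^(j+3)) × ZMod (2^(j+3)), iota (j+3) (iota (j+3) q) = q :=
      fun q => iota_invol (j+1) q
    refine Nat.card_congr ⟨fun x => ⟨iota (j+3) x.1, ?_⟩, fun x => ⟨iota (j+3) x.1, ?_⟩, ?_, ?_⟩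
    · rw [heq x.1 (Or.inr x.2), x.2]; linear_combination hh
    · rw [heq x.1 (Or.inl x.2), x.2]
    · intro x; ext : 1; exact hinv x.1
    · intro x; ext : 1; exact hinv x.1
  have hdisj : ∀ q : ZMod (2^(j+3)) × ZMod (2^(j+3)),
      ¬(gmap d (j+3) q = 1 ∧ gmap d (j+3) q = 1 + ((2^(j+3) : ℕ) : ZMod (2^(j+4)))) := by
    rintro q ⟨h1, h2⟩
    rw [h1] at h2
    exact two_pow_cast_ne j (by linear_combination -h2)
  have e3 : Nat.card {q : ZMod (2^(j+3)) × ZMod (2^(j+3)) //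
      gmap d (j+3) q = 1 ∨ gmap d (j+3) q = 1 + ((2^(j+3) : ℕ) : ZMod (2^(j+4)))}
      = BN d (j+3) + Nat.card {q : ZMod (2^(j+3)) × ZMod (2^(j+3)) //
          gmap d (j+3) q = 1 + ((2^(j+3) : ℕ) : ZMod (2^(j+4)))} := by
    rw [Nat.card_eq_fintype_card, Nat.card_eq_fintype_card, BN, Nat.card_eq_fintype_card]
    refine Fintype.card_subtype_or_disjoint _ _ ?_
    intro r hr1 hr2 q hq
    exact absurd ⟨hr1 q hq, hr2 q hq⟩ (hdisj q)
  rw [e1, e3, e2]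
  ring

end ZC8

section ZC9
variable (d : ℤ)

def down (m : ℕ) : ZMod (2^(m+1)) →+ ZMod (2^m) :=
  (ZMod.castHom (pow_dvd_pow 2 (Nat.le_succ m)) (ZMod (2^m))).toAddMonoidHom

lemma down_apply (m : ℕ) (x : ZMod (2^(m+1))) : down m x = ((x.val : ℕ) : ZMod (2^m)) :=
  pi_apply m x

lemma down_surj (m : ℕ) : Function.Surjective (down m) := by
  intro b
  refine ⟨((b.val : ℕ) : ZMod (2^(m+1))), ?_⟩
  rw [down_apply, ZMod.val_natCast]
  rw [Nat.mod_eq_of_lt (lt_of_lt_of_le (ZMod.val_lt b) (Nat.pow_le_pow_right (by norm_num) (Nat.le_succ m)))]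
  exact natCast_val_self b

def down2 (m : ℕ) : (ZMod (2^(m+1)) × ZMod (2^(m+1))) →+ (ZMod (2^m) × ZMod (2^m)) :=
  (down m).prodMap (down m)

lemma down2_surj (m : ℕ) : Function.Surjective (down2 m) :=
  Function.Surjective.prodMap (down_surj m) (down_surj m)

lemma down2_apply (m : ℕ) (p : ZMod (2^(m+1)) × ZMod (2^(m+1))) :
    down2 m p = (((p.1.val : ℕ) : ZMod (2^m)), ((p.2.val : ℕ) : ZMod (2^m))) := by
  show ((down m) p.1, (down m) p.2) = _
  rw [down_apply, down_apply]

lemma card_zmod_prod (m : ℕ) : Nat.card (ZMod (2^m) × ZMod (2^m)) = 2^m * 2^m := by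
  rw [Nat.card_prod, Nat.card_zmod]

lemma solN_step (j : ℕ) (hd : d % 2 = 1) : solN d (j+4) = 2 * solN d (j+3) := by
  have hcc := card_comp_of_fiber_const (f := ⇑(down2 (j+3)))
    (fun b₁ b₂ => fiber_card_const (down2 (j+3)) (down2_surj (j+3)) b₁ b₂)
    (fun q => gmap d (j+3) q = 1)
  have hfe : ∀ p : ZMod (2^(j+4)) × ZMod (2^(j+4)),
      (gmap d (j+3) (down2 (j+3) p) = 1) ↔ p.1^2 + (d : ZMod (2^(j+4))) * p.2^2 = 1 := by
    intro p
    have h1 : p.1^2 + (d : ZMod (2^(j+4))) * p.2^2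
        = gmap d (j+3) (((p.1.val : ℕ) : ZMod (2^(j+3))), ((p.2.val : ℕ) : ZMod (2^(j+3)))) :=
      form_eq_g d (j+2) p
    rw [down2_apply, ← h1]
  have e1 : Nat.card {p : ZMod (2^(j+4)) × ZMod (2^(j+4)) // gmap d (j+3) (down2 (j+3) p) = 1}
      = solN d (j+4) := Nat.card_congr (Equiv.subtypeEquivRight hfe)
  rw [e1, card_zmod_prod, card_zmod_prod] at hcc
  have hBN : (2^(j+4) * 2^(j+4) : ℕ) * Nat.card {q : ZMod (2^(j+3)) × ZMod (2^(j+3)) // gmap d (j+3) q = 1}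
      = 2^(j+3) * 2^(j+3) * (2 * solN d (j+3)) := by
    have := BN_split d j hd
    rw [BN] at this
    calc (2^(j+4) * 2^(j+4) : ℕ) * Nat.card {q : ZMod (2^(j+3)) × ZMod (2^(j+3)) // gmap d (j+3) q = 1}
        = 2^(j+3) * 2^(j+3) * (2 * (2 * Nat.card {q : ZMod (2^(j+3)) × ZMod (2^(j+3)) // gmap d (j+3) q = 1})) := by ring
      _ = 2^(j+3) * 2^(j+3) * (2 * solN d (j+3)) := by rw [← this]
  rw [hBN] at hcc
  exact Nat.eq_of_mul_eq_mul_left (by positivity) hcc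

end ZC9

section ZC10
variable (d : ℤ)

lemma solN_base (hd4 : d % 4 = 1) : solN d 3 = 16 := by
  have h8 : d % 8 = 1 ∨ d % 8 = 5 := by omega
  have hc : (d : ZMod (2^3)) = ((d % 8 : ℤ) : ZMod (2^3)) := by
    rw [ZMod.intCast_eq_intCast_iff']
    norm_num [Int.emod_emod_of_dvd]
  rcases h8 with h | h <;> rw [h] at hc
  · have e : solN d 3 = Nat.card {q : ZMod (2^3) × ZMod (2^3) // q.1^2 + ((1:ℤ) : ZMod (2^3)) * q.2^2 = 1} := by
      refine Nat.card_congr (Equiv.subtypeEquivRight (fun q => ?_))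
      rw [show ((1:ℤ) : ZMod (2^3)) = ((d:ℤ) : ZMod (2^3)) from hc.symm]
    rw [e, Nat.card_eq_fintype_card]
    decide
  · have e : solN d 3 = Nat.card {q : ZMod (2^3) × ZMod (2^3) // q.1^2 + ((5:ℤ) : ZMod (2^3)) * q.2^2 = 1} := by
      refine Nat.card_congr (Equiv.subtypeEquivRight (fun q => ?_))
      rw [show ((5:ℤ) : ZMod (2^3)) = ((d:ℤ) : ZMod (2^3)) from hc.symm]
    rw [e, Nat.card_eq_fintype_card]
    decide

lemma solN_formula (hd4 : d % 4 = 1) (j : ℕ) : solN d (j+3) = 2^(j+4) := by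
  have hd2 : d % 2 = 1 := by omega
  induction j with
  | zero => rw [solN_base d hd4]; norm_num
  | succ i ih =>
    have : solN d (i+4) = 2 * solN d (i+3) := solN_step d i hd2
    rw [show i + 1 + 3 = i + 4 from rfl, this, ih]
    ring

lemma twos_iff (m : ℕ) (s : ZMod (2^(m+1))) :
    2 * s = 2 ↔ ((s.val : ℕ) : ZMod (2^m)) = 1 := by
  have hs : s = ((s.val : ℤ) : ZMod (2^(m+1))) := by
    rw [show ((s.val : ℤ) : ZMod (2^(m+1))) = ((s.val : ℕ) : ZMod (2^(m+1))) by push_cast; ring,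
      natCast_val_self]
  have h1 : (2 * s = 2) ↔ ((2^(m+1) : ℤ)) ∣ (2 - 2*(s.val:ℤ)) := by
    constructor
    · intro h
      have : ((2*(s.val:ℤ) : ℤ) : ZMod (2^(m+1))) = ((2:ℤ) : ZMod (2^(m+1))) := by
        push_cast
        rw [natCast_val_self]
        exact_mod_cast h
      have := (ZMod.intCast_eq_intCast_iff_dvd_sub (2*(s.val:ℤ)) 2 (2^(m+1))).mp this
      exact_mod_cast this
    · intro h
      have h2 := (ZMod.intCast_eq_intCast_iff_dvd_sub (2*(s.val:ℤ)) 2 (2^(m+1))).mpr (by exact_mod_cast h)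
      push_cast at h2
      rw [natCast_val_self] at h2
      exact_mod_cast h2
  have h2 : (((s.val : ℕ) : ZMod (2^m)) = 1) ↔ ((2^m : ℤ)) ∣ (1 - (s.val:ℤ)) := by
    constructor
    · intro h
      have : (((s.val:ℤ) : ℤ) : ZMod (2^m)) = ((1:ℤ) : ZMod (2^m)) := by push_cast; exact_mod_cast h
      have := (ZMod.intCast_eq_intCast_iff_dvd_sub ((s.val:ℤ)) 1 (2^m)).mp this
      exact_mod_cast this
    · intro h
      have h2 := (ZMod.intCast_eq_intCast_iff_dvd_sub ((s.val:ℤ)) 1 (2^m)).mpr (by exact_mod_cast h)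
      push_cast at h2
      exact_mod_cast h2
  rw [h1, h2]
  rw [show (2 - 2*(s.val:ℤ)) = 2 * (1 - (s.val:ℤ)) by ring,
    show ((2:ℤ)^(m+1)) = 2 * 2^m by ring]
  exact mul_dvd_mul_iff_left two_ne_zero

lemma Dcard (hd4 : d % 4 = 1) (j : ℕ) :
    Nat.card {p : ZMod (2^(j+4)) × ZMod (2^(j+4)) //
      2 * (p.1^2 + (d : ZMod (2^(j+4))) * p.2^2) = 2} = 2^(j+6) := by
  have hcc := card_comp_of_fiber_const (f := ⇑(down2 (j+3)))
    (fun b₁ b₂ => fiber_card_const (down2 (j+3)) (down2_surj (j+3)) b₁ b₂)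
    (fun q => q.1^2 + (d : ZMod (2^(j+3))) * q.2^2 = 1)
  have hfe : ∀ p : ZMod (2^(j+4)) × ZMod (2^(j+4)),
      ((down2 (j+3) p).1^2 + (d : ZMod (2^(j+3))) * (down2 (j+3) p).2^2 = 1)
        ↔ 2 * (p.1^2 + (d : ZMod (2^(j+4))) * p.2^2) = 1 + 1 := by
    intro p
    set s : ZMod (2^(j+4)) := p.1^2 + (d : ZMod (2^(j+4))) * p.2^2 with hsdef
    have hcast : (down2 (j+3) p).1^2 + (d : ZMod (2^(j+3))) * (down2 (j+3) p).2^2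
        = ((s.val : ℕ) : ZMod (2^(j+3))) := by
      have hdown : ((s.val : ℕ) : ZMod (2^(j+3)))
          = ZMod.castHom (pow_dvd_pow 2 (Nat.le_succ (j+3))) (ZMod (2^(j+3))) s := by
        rw [pi_apply]
      rw [hdown, hsdef, map_add, _root_.map_mul, map_pow, map_pow, map_intCast, down2_apply]
      rw [pi_apply, pi_apply]
    rw [hcast, ← twos_iff (j+3) s]
    norm_num
  have e1 : Nat.card {p : ZMod (2^(j+4)) × ZMod (2^(j+4)) //
      (down2 (j+3) p).1^2 + (d : ZMod (2^(j+3))) * (down2 (j+3) p).2^2 = 1}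
      = Nat.card {p : ZMod (2^(j+4)) × ZMod (2^(j+4)) //
          2 * (p.1^2 + (d : ZMod (2^(j+4))) * p.2^2) = 2} := by
    refine Nat.card_congr (Equiv.subtypeEquivRight (fun p => ?_))
    rw [hfe p]
    norm_num
  rw [e1, card_zmod_prod, card_zmod_prod] at hcc
  have hsol : Nat.card {q : ZMod (2^(j+3)) × ZMod (2^(j+3)) //
      q.1^2 + (d : ZMod (2^(j+3))) * q.2^2 = 1} = 2^(j+4) := solN_formula d hd4 j
  rw [hsol] at hcc
  have : (2^(j+3) * 2^(j+3) : ℕ) * Nat.card {p : ZMod (2^(j+4)) × ZMod (2^(j+4)) //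
      2 * (p.1^2 + (d : ZMod (2^(j+4))) * p.2^2) = 2} = 2^(j+3) * 2^(j+3) * 2^(j+6) := by
    rw [hcc]; ring
  exact Nat.eq_of_mul_eq_mul_left (by positivity) this

end ZC10

section RqPart
variable (d : ℤ) (k : ℕ)

local instance inst_s15 (m : ℕ) : NeZero ((2:ℕ)^m) := ⟨(Nat.pow_pos (n := m) two_pos).ne'⟩

local notation "Z2" => Zsqrtd (-d)

noncomputable def mkq : Z2 →+* Rq d (2^k) :=
  Ideal.Quotient.mk (Ideal.span {((2^k : ℤ) : Z2)})

lemma mk_eq_mk_iff (z w : Z2) :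
    mkq d k z = mkq d k w ↔ ((2^k : ℤ) ∣ (z.re - w.re) ∧ (2^k : ℤ) ∣ (z.im - w.im)) := by
  rw [mkq, Ideal.Quotient.eq, Ideal.mem_span_singleton, Zsqrtd.intCast_dvd,
    Zsqrtd.re_sub, Zsqrtd.im_sub]

lemma mkq_surj : Function.Surjective (mkq d k) := Ideal.Quotient.mk_surjective

/-- the coordinate parametrization of `Rq d (2^k)`. -/
noncomputable def Fco (p : ZMod (2^k) × ZMod (2^k)) : Rq d (2^k) :=
  mkq d k ⟨(p.1.val : ℤ), (p.2.val : ℤ)⟩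

lemma int_dvd_iff_zmod (a b : ℤ) : ((2^k : ℤ) ∣ (a - b)) ↔ ((a : ZMod (2^k)) = (b : ZMod (2^k))) := by
  rw [ZMod.intCast_eq_intCast_iff_dvd_sub]
  constructor
  · intro h; exact_mod_cast (dvd_sub_comm.mp h)
  · intro h; exact_mod_cast (dvd_sub_comm.mp h)

lemma Fco_bij : Function.Bijective (Fco d k) := by
  constructor
  · rintro p q h
    rw [Fco, Fco, mk_eq_mk_iff] at h
    obtain ⟨h1, h2⟩ := h
    rw [int_dvd_iff_zmod] at h1 h2
    have e1 : p.1 = q.1 := by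
      have := h1
      push_cast at this
      rwa [natCast_val_self, natCast_val_self] at this
    have e2 : p.2 = q.2 := by
      have := h2
      push_cast at this
      rwa [natCast_val_self, natCast_val_self] at this
    exact Prod.ext e1 e2
  · intro u
    obtain ⟨z, rfl⟩ := mkq_surj d k u
    refine ⟨(((z.re : ZMod (2^k))), ((z.im : ZMod (2^k)))), ?_⟩
    rw [Fco, mk_eq_mk_iff]
    constructor <;>
    · rw [int_dvd_iff_zmod]
      push_cast
      rw [natCast_val_self]

lemma conjQ_mkq (z : Z2) : conjQ d (2^k) (mkq d k z) = mkq d k (star z) :=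
  Ideal.quotientMap_mk

/-- transfer of the determinant condition to coordinates, divisibility form. -/
lemma cond_dvd_iff (z : Z2) :
    2 * mkq d k z * conjQ d (2^k) (mkq d k z) = 2 ↔ (2^k : ℤ) ∣ (2 * z.norm - 2) := by
  rw [conjQ_mkq]
  have h1 : 2 * mkq d k z * mkq d k (star z) = mkq d k ((2 * z.norm : ℤ) : Z2) := by
    rw [show ((2 * z.norm : ℤ) : Z2) = 2 * (z * star z) by
      rw [← Zsqrtd.norm_eq_mul_conj]; push_cast; ring]
    rw [_root_.map_mul, _root_.map_mul, map_ofNat]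
    ring
  have h2 : (2 : Rq d (2^k)) = mkq d k (((2 : ℤ) : Z2)) := by
    rw [map_intCast]
    norm_num
  rw [h1, h2, mk_eq_mk_iff]
  rw [Zsqrtd.re_intCast, Zsqrtd.re_intCast, Zsqrtd.im_intCast, Zsqrtd.im_intCast]
  simp

lemma cond_iff (z : Z2) :
    2 * mkq d k z * conjQ d (2^k) (mkq d k z) = 2
      ↔ 2 * (((z.re : ℤ) : ZMod (2^k))^2 + (d : ZMod (2^k)) * ((z.im : ℤ) : ZMod (2^k))^2) = 2 := by
  rw [cond_dvd_iff]
  have hn : z.norm = z.re * z.re + d * (z.im * z.im) := by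
    rw [Zsqrtd.norm_def]; ring
  rw [int_dvd_iff_zmod, hn]
  constructor
  · intro h
    have := h
    push_cast at this ⊢
    linear_combination this
  · intro h
    push_cast at h ⊢
    linear_combination h

lemma finite_Rq : Finite (Rq d (2^k)) := Finite.of_surjective (Fco d k) (Fco_bij d k).2

lemma card_Dset (hd4 : d % 4 = 1) (j : ℕ) :
    Nat.card {u : Rq d (2^(j+4)) // 2 * u * conjQ d (2^(j+4)) u = 2} = 2^(j+6) := by
  rw [← Dcard d hd4 j]
  have key : ∀ p : ZMod (2^(j+4)) × ZMod (2^(j+4)),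
      (2 * (p.1^2 + (d : ZMod (2^(j+4))) * p.2^2) = 2) ↔
      2 * Fco d (j+4) p * conjQ d (2^(j+4)) (Fco d (j+4) p) = 2 := by
    intro p
    have hv1 : (((p.1.val : ℤ)) : ZMod (2^(j+4))) = p.1 := by
      push_cast; rw [natCast_val_self]
    have hv2 : (((p.2.val : ℤ)) : ZMod (2^(j+4))) = p.2 := by
      push_cast; rw [natCast_val_self]
    have hci := cond_iff d (j+4) ⟨(p.1.val : ℤ), (p.2.val : ℤ)⟩
    dsimp only at hci
    rw [hv1, hv2] at hci
    exact hci.symm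
  exact (Nat.card_congr ((Equiv.ofBijective _ (Fco_bij d (j+4))).subtypeEquiv key)).symm

end RqPart

section RqInv

lemma D_inv_mem {R : Type*} [CommRing R] (σ : R →+* R) (u u' : R)
    (hu : 2 * u * σ u = 2) (h2 : u * u' = 1) : 2 * u' * σ u' = 2 := by
  have hσ2 : σ u * σ u' = 1 := by rw [← _root_.map_mul, h2, _root_.map_one]
  linear_combination (-(u' * σ u')) * hu + (2 * (σ u * σ u')) * h2 + 2 * hσ2

variable (d : ℤ) (k : ℕ)

lemma exists_inv (h2k : 2 ≤ k) (u : Rq d (2^k)) (hu : 2 * u * conjQ d (2^k) u = 2) :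
    ∃ u' : Rq d (2^k), u * u' = 1 ∧ 2 * u' * conjQ d (2^k) u' = 2 := by
  obtain ⟨z, rfl⟩ := mkq_surj d k u
  have hdvd : (2^k : ℤ) ∣ (2 * z.norm - 2) := (cond_dvd_iff d k z).mp hu
  have hodd : Odd z.norm := by
    obtain ⟨j, rfl⟩ : ∃ j, k = j + 2 := ⟨k - 2, by omega⟩
    obtain ⟨t, ht⟩ := hdvd
    refine ⟨2^j * t, ?_⟩
    have : (2:ℤ)^(j+2) = 2 * (2 * 2^j) := by ring
    linarith [this ▸ ht]
  obtain ⟨s, hs⟩ := hodd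
  have hcop : IsCoprime z.norm ((2:ℤ)^k) := by
    refine IsCoprime.pow_right ⟨1, -s, ?_⟩
    linarith
  obtain ⟨x, y, hxy⟩ := hcop
  refine ⟨mkq d k (star z * (x : Zsqrtd (-d))), ?_, ?_⟩
  · have h1 : mkq d k z * mkq d k (star z * (x : Zsqrtd (-d)))
        = mkq d k (((z.norm * x : ℤ) : Zsqrtd (-d))) := by
      rw [← _root_.map_mul]
      congr 1
      rw [show z * (star z * (x : Zsqrtd (-d))) = (z * star z) * (x : Zsqrtd (-d)) by ring,
        ← Zsqrtd.norm_eq_mul_conj]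
      push_cast
      ring
    rw [h1]
    have h2 : ((z.norm * x : ℤ) : Zsqrtd (-d)) = 1 - ((2^k * y : ℤ) : Zsqrtd (-d)) := by
      have : (z.norm * x : ℤ) = 1 - 2^k * y := by linarith [hxy]
      rw [this]
      push_cast
      ring
    rw [h2, map_sub, _root_.map_one]
    have h3 : mkq d k (((2^k * y : ℤ) : Zsqrtd (-d))) = 0 := by
      rw [mkq, Ideal.Quotient.eq_zero_iff_mem, Ideal.mem_span_singleton]
      rw [show ((2^k * y : ℤ) : Zsqrtd (-d)) = ((2^k : ℤ) : Zsqrtd (-d)) * ((y:ℤ) : Zsqrtd (-d)) by push_cast; ring]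
      exact Dvd.intro _ rfl
    rw [h3, sub_zero]
  · -- membership of the inverse in D
    refine D_inv_mem (conjQ d (2^k)) (mkq d k z) _ hu ?_
    -- same computation as above
    have h1 : mkq d k z * mkq d k (star z * (x : Zsqrtd (-d)))
        = mkq d k (((z.norm * x : ℤ) : Zsqrtd (-d))) := by
      rw [← _root_.map_mul]
      congr 1
      rw [show z * (star z * (x : Zsqrtd (-d))) = (z * star z) * (x : Zsqrtd (-d)) by ring,
        ← Zsqrtd.norm_eq_mul_conj]
      push_cast
      ring
    rw [h1]
    have h2 : ((z.norm * x : ℤ) : Zsqrtd (-d)) = 1 - ((2^k * y : ℤ) : Zsqrtd (-d)) := by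
      have : (z.norm * x : ℤ) = 1 - 2^k * y := by linarith [hxy]
      rw [this]
      push_cast
      ring
    rw [h2, map_sub, _root_.map_one]
    have h3 : mkq d k (((2^k * y : ℤ) : Zsqrtd (-d))) = 0 := by
      rw [mkq, Ideal.Quotient.eq_zero_iff_mem, Ideal.mem_span_singleton]
      rw [show ((2^k * y : ℤ) : Zsqrtd (-d)) = ((2^k : ℤ) : Zsqrtd (-d)) * ((y:ℤ) : Zsqrtd (-d)) by push_cast; ring]
      exact Dvd.intro _ rfl
    rw [h3, sub_zero]

end RqInv

section Mtx
variable {R : Type*} [CommRing R] (σ : R →+* R) (n : ℕ)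

def Emat (u : R) : Matrix (Fin (n+1)) (Fin (n+1)) R :=
  Matrix.diagonal (fun i => if i = Fin.last n then u else 1)

lemma Emat_mul (u v : R) : Emat n u * Emat n v = Emat n (u * v) := by
  rw [Emat, Emat, Emat, Matrix.diagonal_mul_diagonal]
  apply congrArg Matrix.diagonal
  funext i
  by_cases h : i = Fin.last n <;> simp [h]

lemma Emat_one : Emat n (1 : R) = 1 := by
  rw [Emat]
  simp only [ite_self]
  exact Matrix.diagonal_one

lemma Emat_det (u : R) : (Emat n u).det = u := by
  rw [Emat, Matrix.det_diagonal]
  rw [Finset.prod_ite_eq' Finset.univ (Fin.last n) (fun _ => u)]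
  simp

lemma Emat_map (u : R) : (Emat n u).map σ = Emat n (σ u) := by
  rw [Emat, Emat, Matrix.diagonal_map (map_zero σ)]
  apply congrArg Matrix.diagonal
  funext i
  by_cases h : i = Fin.last n <;> simp [h]

lemma Emat_memU (u : R) (hu : 2 * u * σ u = 2) :
    Emat n u * Mmat R n * ((Emat n u).map σ)ᵀ = Mmat R n := by
  rw [Emat_map, Mmat, Emat, Emat, Matrix.diagonal_transpose, Matrix.diagonal_mul_diagonal,
    Matrix.diagonal_mul_diagonal]
  apply congrArg Matrix.diagonal
  funext i
  by_cases h : i = Fin.last n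
  · simp only [h, if_true]
    linear_combination (-(1:R)) * hu
  · simp only [if_neg h]
    ring

lemma U_mul {A B : Matrix (Fin (n+1)) (Fin (n+1)) R}
    (hA : A * Mmat R n * (A.map σ)ᵀ = Mmat R n) (hB : B * Mmat R n * (B.map σ)ᵀ = Mmat R n) :
    (A * B) * Mmat R n * ((A * B).map σ)ᵀ = Mmat R n := by
  rw [Matrix.map_mul, Matrix.transpose_mul]
  calc A * B * Mmat R n * ((B.map σ)ᵀ * (A.map σ)ᵀ)
      = A * (B * Mmat R n * (B.map σ)ᵀ) * (A.map σ)ᵀ := by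
        simp only [Matrix.mul_assoc]
    _ = A * Mmat R n * (A.map σ)ᵀ := by rw [hB]
    _ = Mmat R n := hA

lemma Mmat_det : (Mmat R n).det = -2 := by
  rw [Mmat, Matrix.det_diagonal]
  rw [Finset.prod_ite_eq' Finset.univ (Fin.last n) (fun _ => (-2 : R))]
  simp

lemma U_det {A : Matrix (Fin (n+1)) (Fin (n+1)) R}
    (hA : A * Mmat R n * (A.map σ)ᵀ = Mmat R n) : 2 * A.det * σ A.det = 2 := by
  have h := congrArg Matrix.det hA
  rw [Matrix.det_mul, Matrix.det_mul, Matrix.det_transpose] at h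
  have hmap : (A.map σ).det = σ A.det := by
    rw [RingHom.map_det, RingHom.mapMatrix_apply]
  rw [hmap, Mmat_det] at h
  linear_combination (-(1:R)) * h

lemma card_U_eq (hinv : ∀ u : R, 2 * u * σ u = 2 → ∃ u', u * u' = 1 ∧ 2 * u' * σ u' = 2) :
    Nat.card {A : Matrix (Fin (n+1)) (Fin (n+1)) R // A * Mmat R n * (A.map σ)ᵀ = Mmat R n}
      = Nat.card {u : R // 2 * u * σ u = 2} *
        Nat.card {A : Matrix (Fin (n+1)) (Fin (n+1)) R //
          A * Mmat R n * (A.map σ)ᵀ = Mmat R n ∧ A.det = 1} := by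
  rw [← Nat.card_prod]
  refine (Nat.card_congr (Equiv.ofBijective
    (fun x : {u : R // 2 * u * σ u = 2} × {A : Matrix (Fin (n+1)) (Fin (n+1)) R //
        A * Mmat R n * (A.map σ)ᵀ = Mmat R n ∧ A.det = 1} =>
      (⟨x.2.1 * Emat n x.1.1, U_mul σ n x.2.2.1 (Emat_memU σ n x.1.1 x.1.2)⟩ :
        {A : Matrix (Fin (n+1)) (Fin (n+1)) R // A * Mmat R n * (A.map σ)ᵀ = Mmat R n}))
    ⟨?_, ?_⟩)).symm
  · rintro ⟨⟨u₁, hu₁⟩, ⟨B₁, hB₁, hd₁⟩⟩ ⟨⟨u₂, hu₂⟩, ⟨B₂, hB₂, hd₂⟩⟩ h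
    simp only [Subtype.mk.injEq] at h
    have hdet : u₁ = u₂ := by
      have := congrArg Matrix.det h
      rw [Matrix.det_mul, Matrix.det_mul, Emat_det, Emat_det, hd₁, hd₂, one_mul, one_mul] at this
      exact this
    subst hdet
    obtain ⟨u', hinv1, _⟩ := hinv u₁ hu₁
    have hcancel : ∀ B : Matrix (Fin (n+1)) (Fin (n+1)) R, B * Emat n u₁ * Emat n u' = B := by
      intro B
      rw [Matrix.mul_assoc, Emat_mul, hinv1, Emat_one, Matrix.mul_one]
    have hB : B₁ = B₂ := by
      have := congrArg (fun C => C * Emat n u') h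
      simpa only [hcancel] using this
    exact Prod.ext (Subtype.ext rfl) (Subtype.ext hB)
  · rintro ⟨A, hA⟩
    obtain ⟨u', hinv1, hu'⟩ := hinv A.det (U_det σ n hA)
    refine ⟨⟨⟨A.det, U_det σ n hA⟩, ⟨A * Emat n u', U_mul σ n hA (Emat_memU σ n u' hu'), ?_⟩⟩, ?_⟩
    · rw [Matrix.det_mul, Emat_det]
      exact hinv1
    · simp only [Subtype.mk.injEq]
      rw [Matrix.mul_assoc, Emat_mul, mul_comm u' A.det, hinv1, Emat_one, Matrix.mul_one]

end Mtx


/-- Ramified index formula for `M`: for all sufficiently large `k`,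
`#U(M, ℤ[√-d]/(2^k)) = 2^{k+2} · #SU(M, ℤ[√-d]/(2^k))`. -/
theorem card_U_M_eq_index_mul_card_SU_M_two_ramified (d : ℤ) (hd : 0 < d)
    (hsf : Squarefree d) (hd4 : d % 4 = 1) (n : ℕ) (hn : 1 ≤ n) :
    ∃ k₀ : ℕ, ∀ k ≥ k₀,
      Nat.card {A : Matrix (Fin (n + 1)) (Fin (n + 1)) (Rq d (2 ^ k)) //
          A * Mmat (Rq d (2 ^ k)) n * (A.map (conjQ d (2 ^ k)))ᵀ = Mmat (Rq d (2 ^ k)) n}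
        = 2 ^ (k + 2) *
          Nat.card {A : Matrix (Fin (n + 1)) (Fin (n + 1)) (Rq d (2 ^ k)) //
            A * Mmat (Rq d (2 ^ k)) n * (A.map (conjQ d (2 ^ k)))ᵀ = Mmat (Rq d (2 ^ k)) n ∧
            A.det = 1} := by
  refine ⟨4, fun k hk => ?_⟩
  obtain ⟨j, rfl⟩ : ∃ j, k = j + 4 := ⟨k - 4, by omega⟩
  rw [card_U_eq (conjQ d (2 ^ (j + 4))) n (fun u hu => exists_inv d (j+4) (by omega) u hu)]
  rw [card_Dset d hd4 j]
end
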